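/- Let ℓ ≥ 2 be a fixed integer and let 𝐦 = (𝐦_S) be a fixed vector of non-negative integers indexed by the unordered pairs S of distinct elements of [ℓ], with σ := ∑_S 𝐦_S ≥ 1. Then there exists a constant C > 0 (depending only on ℓ and 𝐦) such that for every positive integer n there exist families 𝓕_1, …, 𝓕_ℓ ⊆ 2^{[n]} satisfying the 𝐦-overlapping property with ∏_{k=1}^{ℓ} |𝓕_k| ≥ (1 − C/n) · 2^n · ∏_S (1/𝐦_S!) · (𝐦_S · n / σ)^{𝐦_S}, where the product is over all unordered pairs S of distinct elements of [ℓ] and the convention 0^0 = 1 is used. -/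

import Mathlib

/-- Families `𝓕 1, …, 𝓕 ℓ` of subsets of `[n]` satisfy the `m`-overlapping property:
for distinct `k₁ k₂` and sets `F₁ ∈ 𝓕 k₁`, `F₂ ∈ 𝓕 k₂` we have `|F₁ ∩ F₂| ≤ m k₁ k₂`.
The vector `m` indexed by unordered pairs is encoded as a symmetric function. -/
def MOverlap (n ℓ : ℕ) (m : Fin ℓ → Fin ℓ → ℕ) (𝓕 : Fin ℓ → Finset (Finset (Fin n))) : Prop :=
  ∀ k₁ k₂ : Fin ℓ, k₁ ≠ k₂ → ∀ F₁ ∈ 𝓕 k₁, ∀ F₂ ∈ 𝓕 k₂, (F₁ ∩ F₂).card ≤ m k₁ k₂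

/-- `s*(n, ℓ, m)`: the maximum of `|𝓕 1|⋯|𝓕 ℓ|` over collections of families of subsets
of `[n]` with the `m`-overlapping property. -/
noncomputable def sStar (n ℓ : ℕ) (m : Fin ℓ → Fin ℓ → ℕ) : ℕ :=
  open Classical in
  Finset.univ.sup (fun 𝓕 : Fin ℓ → Finset (Finset (Fin n)) =>
    if MOverlap n ℓ m 𝓕 then ∏ k, (𝓕 k).card else 0)

/-- The unordered pairs of distinct elements of `K`, represented as ordered pairs `(i, j)`
with `i < j`. -/
def pairsOf {ℓ : ℕ} (K : Finset (Fin ℓ)) : Finset (Fin ℓ × Fin ℓ) :=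
  K.offDiag.filter (fun p => p.1 < p.2)

open Finset in

/-- Weierstrass product inequality. -/
lemma myWeier {ι : Type*} (s : Finset ι) (f : ι → ℝ)
    (h0 : ∀ i ∈ s, 0 ≤ f i) (h1 : ∀ i ∈ s, f i ≤ 1) :
    1 - ∑ i ∈ s, f i ≤ ∏ i ∈ s, (1 - f i) := by
  classical
  induction s using Finset.induction_on with
  | empty => simp
  | @insert j s hj ih =>
    rw [Finset.sum_insert hj, Finset.prod_insert hj]
    have ih' := ih (fun i hi => h0 i (mem_insert_of_mem hi)) (fun i hi => h1 i (mem_insert_of_mem hi))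
    have hS : 0 ≤ ∑ i ∈ s, f i := Finset.sum_nonneg (fun i hi => h0 i (mem_insert_of_mem hi))
    have hj0 := h0 j (mem_insert_self j s)
    have hj1 := h1 j (mem_insert_self j s)
    nlinarith [mul_nonneg (sub_nonneg.2 hj1) (sub_nonneg.2 ih')]

/-- A partition of `Fin n` into parts of prescribed sizes. -/
lemma myPartition {ι : Type*} [Fintype ι] [DecidableEq ι] (n : ℕ)
    (sizes : ι → ℕ) (hsum : ∑ i, sizes i = n) :
    ∃ (parts : ι → Finset (Fin n)) (idx : Fin n → ι),
      (∀ i, (parts i).card = sizes i) ∧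
      (∀ x i, x ∈ parts i ↔ idx x = i) := by
  classical
  have hcard : Fintype.card (Σ i : ι, Fin (sizes i)) = n := by
    simp [hsum]
  let e := Fintype.equivFinOfCardEq hcard
  refine ⟨fun i => Finset.univ.image (fun y : Fin (sizes i) => e ⟨i, y⟩),
    fun x => (e.symm x).1, fun i => ?_, fun x i => ?_⟩
  · rw [Finset.card_image_of_injective _ (fun a b hab => sigma_mk_injective (e.injective hab))]
    simp
  · constructor
    · intro hx
      obtain ⟨y, -, rfl⟩ := Finset.mem_image.1 hx
      simp [e]
    · intro h
      refine Finset.mem_image.2 ⟨h ▸ (e.symm x).2, Finset.mem_univ _, ?_⟩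
      have hx : (⟨i, h ▸ (e.symm x).2⟩ : Σ i, Fin (sizes i)) = e.symm x := by
        subst h; rfl
      rw [hx, e.apply_symm_apply]

open Finset in


/-- Counting sets with prescribed traces on disjoint parts. -/
lemma myCount {α ι : Type*} [DecidableEq α] [DecidableEq ι]
    (parts : ι → Finset α) (𝒞 : ι → Finset (Finset α)) (I : Finset ι)
    (hdisj : ∀ i ∈ I, ∀ j ∈ I, i ≠ j → Disjoint (parts i) (parts j))
    (hsub : ∀ i ∈ I, ∀ A ∈ 𝒞 i, A ⊆ parts i) :
    ((I.sup parts).powerset.filter (fun F => ∀ i ∈ I, F ∩ parts i ∈ 𝒞 i)).card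
      = ∏ i ∈ I, (𝒞 i).card := by
  classical
  induction I using Finset.induction_on with
  | empty => simp
  | @insert j s hj ih =>
    have hdisj' : ∀ i ∈ s, Disjoint (parts j) (parts i) := fun i hi =>
      hdisj j (mem_insert_self j s) i (mem_insert_of_mem hi) (fun h => hj (h ▸ hi))
    rw [Finset.prod_insert hj, ← ih (fun i hi j' hj' h => hdisj i (mem_insert_of_mem hi) j' (mem_insert_of_mem hj') h) (fun i hi => hsub i (mem_insert_of_mem hi)), ← Finset.card_product]
    apply Finset.card_bij' (fun F _ => (F ∩ parts j, F \ parts j))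
      (fun pr _ => pr.1 ∪ pr.2)
    · -- forward lands in target
      intro F hF
      rw [Finset.mem_filter, Finset.mem_powerset, Finset.sup_insert] at hF
      obtain ⟨hFsub, hFmem⟩ := hF
      rw [Finset.mem_product]
      constructor
      · exact hFmem j (mem_insert_self j s)
      · rw [Finset.mem_filter, Finset.mem_powerset]
        constructor
        · intro x hx
          rw [Finset.mem_sdiff] at hx
          have := hFsub hx.1
          rw [Finset.sup_eq_union, Finset.mem_union] at this
          tauto
        · intro i hi
          have hkey : (F \ parts j) ∩ parts i = F ∩ parts i := by
            ext x
            simp only [Finset.mem_inter, Finset.mem_sdiff]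
            have := Finset.disjoint_left.1 (hdisj' i hi)
            tauto
          rw [hkey]
          exact hFmem i (mem_insert_of_mem hi)
    · -- backward lands in source
      rintro ⟨A, G⟩ hAG
      rw [Finset.mem_product] at hAG
      obtain ⟨hA, hG⟩ := hAG
      rw [Finset.mem_filter, Finset.mem_powerset] at hG
      obtain ⟨hGsub, hGmem⟩ := hG
      have hApj : A ⊆ parts j := hsub j (mem_insert_self j s) A hA
      have hGpj : ∀ x ∈ G, x ∉ parts j := by
        intro x hx
        have hx2 := hGsub hx
        rw [Finset.mem_sup] at hx2
        obtain ⟨i, hi, hxi⟩ := hx2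
        exact Finset.disjoint_right.1 (hdisj' i hi) hxi
      rw [Finset.mem_filter, Finset.mem_powerset, Finset.sup_insert]
      refine ⟨?_, ?_⟩
      · intro x hx
        rw [Finset.mem_union] at hx
        rw [Finset.sup_eq_union, Finset.mem_union]
        rcases hx with hx | hx
        · exact Or.inl (hApj hx)
        · exact Or.inr (hGsub hx)
      · intro i hi
        rcases Finset.mem_insert.1 hi with rfl | hi'
        · have : (A ∪ G) ∩ parts i = A := by
            ext x
            simp only [Finset.mem_inter, Finset.mem_union]
            constructor
            · rintro ⟨hx1 | hx1, hx2⟩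
              · exact hx1
              · exact absurd hx2 (hGpj x hx1)
            · intro hx; exact ⟨Or.inl hx, hApj hx⟩
          rw [this]; exact hA
        · have : (A ∪ G) ∩ parts i = G ∩ parts i := by
            ext x
            simp only [Finset.mem_inter, Finset.mem_union]
            have hd := Finset.disjoint_left.1 (hdisj' i hi')
            constructor
            · rintro ⟨hx1 | hx1, hx2⟩
              · exact absurd hx2 (hd (hApj hx1))
              · exact ⟨hx1, hx2⟩
            · rintro ⟨hx1, hx2⟩; exact ⟨Or.inr hx1, hx2⟩
          rw [this]; exact hGmem i hi'
    · -- left inverse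
      intro F hF
      ext x
      simp only [Finset.mem_union, Finset.mem_inter, Finset.mem_sdiff]
      tauto
    · -- right inverse
      rintro ⟨A, G⟩ hAG
      rw [Finset.mem_product] at hAG
      obtain ⟨hA, hG⟩ := hAG
      rw [Finset.mem_filter, Finset.mem_powerset] at hG
      have hApj : A ⊆ parts j := hsub j (mem_insert_self j s) A hA
      have hGpj : ∀ x ∈ G, x ∉ parts j := by
        intro x hx
        have hx2 := hG.1 hx
        rw [Finset.mem_sup] at hx2
        obtain ⟨i, hi, hxi⟩ := hx2
        exact Finset.disjoint_right.1 (hdisj j (mem_insert_self j s) i (mem_insert_of_mem hi) (fun h => hj (h ▸ hi))) hxi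
      have h1 : (A ∪ G) ∩ parts j = A := by
        ext x
        simp only [Finset.mem_inter, Finset.mem_union]
        constructor
        · rintro ⟨hx1 | hx1, hx2⟩
          · exact hx1
          · exact absurd hx2 (hGpj x hx1)
        · intro hx; exact ⟨Or.inl hx, hApj hx⟩
      have h2 : (A ∪ G) \ parts j = G := by
        ext x
        simp only [Finset.mem_sdiff, Finset.mem_union]
        constructor
        · rintro ⟨hx1 | hx1, hx2⟩
          · exact absurd (hApj hx1) hx2
          · exact hx1
        · intro hx; exact ⟨Or.inr hx, hGpj x hx⟩
      simp [h1, h2]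

open Finset in
lemma myCount' {α ι : Type*} [DecidableEq α] [DecidableEq ι]
    (parts : ι → Finset α) (𝒞 : ι → Finset (Finset α)) (I : Finset ι)
    (hdisj : ∀ i ∈ I, ∀ j ∈ I, i ≠ j → Disjoint (parts i) (parts j))
    (hsub : ∀ i ∈ I, ∀ A ∈ 𝒞 i, A ⊆ parts i)
    (𝓕 : Finset (Finset α))
    (h𝓕 : ∀ F, F ∈ 𝓕 ↔ (F ⊆ I.sup parts ∧ ∀ i ∈ I, F ∩ parts i ∈ 𝒞 i)) :
    𝓕.card = ∏ i ∈ I, (𝒞 i).card := by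
  classical
  have he : 𝓕 = (I.sup parts).powerset.filter (fun F => ∀ i ∈ I, F ∩ parts i ∈ 𝒞 i) := by
    ext F
    rw [h𝓕 F, Finset.mem_filter, Finset.mem_powerset]
  rw [he]
  exact myCount parts 𝒞 I hdisj hsub

set_option maxHeartbeats 1600000 in
open Finset in
/-- Lower-bound construction: for fixed `ℓ ≥ 2` and a fixed symmetric vector `m` with
`σ = ∑_S m_S ≥ 1`, there is a constant `C > 0` such that for every `n ≥ 1` there exist
families `𝓕 1, …, 𝓕 ℓ` of subsets of `[n]` with the `m`-overlapping property and
`∏_k |𝓕 k| ≥ (1 − C/n) · 2^n · ∏_S (1/m_S!)(m_S·n/σ)^{m_S}`. -/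
theorem statement9 (ℓ : ℕ) (hℓ : 2 ≤ ℓ) (m : Fin ℓ → Fin ℓ → ℕ)
    (hsym : ∀ i j : Fin ℓ, m i j = m j i)
    (hσ : 1 ≤ ∑ p ∈ pairsOf (Finset.univ : Finset (Fin ℓ)), m p.1 p.2) :
    ∃ C : ℝ, 0 < C ∧ ∀ n : ℕ, 1 ≤ n →
      ∃ 𝓕 : Fin ℓ → Finset (Finset (Fin n)),
        MOverlap n ℓ m 𝓕 ∧
        (1 - C / n) * 2 ^ n *
            ∏ p ∈ pairsOf (Finset.univ : Finset (Fin ℓ)),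
              ((1 : ℝ) / (Nat.factorial (m p.1 p.2)) *
                ((m p.1 p.2 : ℝ) * n /
                  (∑ q ∈ pairsOf (Finset.univ : Finset (Fin ℓ)), m q.1 q.2 : ℕ)) ^ (m p.1 p.2))
          ≤ (∏ k, (𝓕 k).card : ℕ) := by
  classical
  set P := pairsOf (Finset.univ : Finset (Fin ℓ)) with hPdef
  set σ : ℕ := ∑ p ∈ P, m p.1 p.2 with hσdef
  have hmemP : ∀ p : Fin ℓ × Fin ℓ, p ∈ P ↔ p.1 < p.2 := by
    intro p
    simp only [hPdef, pairsOf, Finset.mem_filter, Finset.mem_offDiag, Finset.mem_univ, true_and]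
    exact ⟨fun h => h.2, fun h => ⟨ne_of_lt h, h⟩⟩
  have hσpos : 0 < σ := hσ
  have hmP : ∀ p ∈ P, m p.1 p.2 ≤ σ := by
    intro p hp
    exact Finset.single_le_sum (f := fun q : Fin ℓ × Fin ℓ => m q.1 q.2) (fun q _ => Nat.zero_le _) hp
  have hex : ∃ p ∈ P, 1 ≤ m p.1 p.2 := by
    by_contra h
    push_neg at h
    have : σ = 0 := Finset.sum_eq_zero (fun p hp => by have := h p hp; omega)
    omega
  obtain ⟨p₀, hp₀P, hp₀m⟩ := hex
  set Cn : ℕ := σ * (1 + σ) + (∑ p ∈ P, (1 + m p.1 p.2) * σ) + 1 with hCndef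
  refine ⟨(Cn : ℝ), by exact_mod_cast Nat.succ_pos _, ?_⟩
  intro n hn
  have hn0 : (0 : ℝ) < n := by exact_mod_cast hn
  have hσR : (0 : ℝ) < σ := by exact_mod_cast hσpos
  have hBnn : ∀ p ∈ P, (0:ℝ) ≤ (1 : ℝ) / (Nat.factorial (m p.1 p.2)) *
      ((m p.1 p.2 : ℝ) * n / (σ : ℕ)) ^ (m p.1 p.2) := by
    intro p _
    positivity
  have hBprodnn : (0:ℝ) ≤ ∏ p ∈ P, ((1 : ℝ) / (Nat.factorial (m p.1 p.2)) *
      ((m p.1 p.2 : ℝ) * n / (σ : ℕ)) ^ (m p.1 p.2)) := Finset.prod_nonneg hBnn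
  by_cases hbig : σ * (1 + σ) ≤ n
  swap
  · -- small n : trivial families
    refine ⟨fun _ => ∅, ?_, ?_⟩
    · intro k₁ k₂ _ F₁ hF₁; simp at hF₁
    · have hCle : (n : ℝ) ≤ Cn := by
        have : n ≤ Cn := by omega
        exact_mod_cast this
      have h1 : 1 - (Cn : ℝ) / n ≤ 0 := by
        rw [sub_nonpos, le_div_iff₀ hn0, one_mul]
        exact hCle
      have h2 : (0:ℝ) ≤ (2:ℝ) ^ n := by positivity
      have hz : (∏ k : Fin ℓ, (∅ : Finset (Finset (Fin n))).card) = 0 := by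
        rw [Finset.prod_const, Finset.card_empty]
        exact zero_pow (by simp; omega)
      rw [hz]
      have := mul_nonpos_iff.2 (Or.inr ⟨mul_nonpos_iff.2 (Or.inr ⟨h1, h2⟩), hBprodnn⟩)
      rw [Nat.cast_zero]
      exact this
  · -- main construction
    have hbigR : ((σ : ℝ)) * (1 + σ) ≤ n := by exact_mod_cast hbig
    set S : ℕ := ∑ q ∈ P.erase p₀, (m q.1 q.2 * n / σ) with hSdef
    set sizes : Fin ℓ × Fin ℓ → ℕ :=
      fun p => if p = p₀ then n - S else if p ∈ P then m p.1 p.2 * n / σ else 0 with hsizes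
    have hS_le : S ≤ n := by
      have h1 : S * σ ≤ ∑ q ∈ P.erase p₀, m q.1 q.2 * n := by
        rw [hSdef, Finset.sum_mul]
        exact Finset.sum_le_sum (fun q _ => Nat.div_mul_le_self _ _)
      have h2 : ∑ q ∈ P.erase p₀, m q.1 q.2 * n = (∑ q ∈ P.erase p₀, m q.1 q.2) * n := by
        rw [Finset.sum_mul]
      have h3 : ∑ q ∈ P.erase p₀, m q.1 q.2 ≤ σ :=
        Finset.sum_le_sum_of_subset (Finset.erase_subset _ _)
      have : S * σ ≤ n * σ := by
        calc S * σ ≤ (∑ q ∈ P.erase p₀, m q.1 q.2) * n := by rw [← h2]; exact h1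
          _ ≤ σ * n := Nat.mul_le_mul_right _ h3
          _ = n * σ := Nat.mul_comm _ _
      exact Nat.le_of_mul_le_mul_right this hσpos
    have hsumP : ∑ p ∈ P, sizes p = n := by
      rw [← Finset.add_sum_erase _ _ hp₀P]
      have h1 : sizes p₀ = n - S := by simp [hsizes]
      have h2 : ∑ q ∈ P.erase p₀, sizes q = S := by
        rw [hSdef]
        refine Finset.sum_congr rfl (fun q hq => ?_)
        have hq1 : q ≠ p₀ := Finset.ne_of_mem_erase hq
        have hq2 : q ∈ P := Finset.mem_of_mem_erase hq
        simp [hsizes, hq1, hq2]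
      rw [h1, h2]
      omega
    have hsum_univ : ∑ p : Fin ℓ × Fin ℓ, sizes p = n := by
      rw [← Finset.sum_subset (Finset.subset_univ P)]
      · exact hsumP
      · intro p _ hp
        have : p ≠ p₀ := fun h => hp (h ▸ hp₀P)
        simp [hsizes, this, hp]
    obtain ⟨parts, idx, hcard, hmem⟩ := myPartition n sizes hsum_univ
    have hdisj : ∀ i j : Fin ℓ × Fin ℓ, i ≠ j → Disjoint (parts i) (parts j) := by
      intro i j hij
      rw [Finset.disjoint_left]
      intro x hxi hxj
      exact hij (((hmem x i).1 hxi).symm.trans ((hmem x j).1 hxj))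
    have hidxP : ∀ x : Fin n, idx x ∈ P := by
      intro x
      by_contra h
      have hne : idx x ≠ p₀ := fun he => h (he ▸ hp₀P)
      have h0 : sizes (idx x) = 0 := by simp [hsizes, hne, h]
      have : parts (idx x) = ∅ := Finset.card_eq_zero.1 ((hcard _).trans h0)
      have hx : x ∈ parts (idx x) := (hmem x (idx x)).2 rfl
      rw [this] at hx
      exact absurd hx (Finset.notMem_empty x)
    have hfiber : ∀ F : Finset (Fin n), F.card = ∑ p ∈ P, (F ∩ parts p).card := by
      intro F
      rw [Finset.card_eq_sum_card_fiberwise (f := idx) (t := P) (fun x _ => hidxP x)]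
      refine Finset.sum_congr rfl (fun p _ => ?_)
      congr 1
      ext x
      simp only [Finset.mem_filter, Finset.mem_inter, hmem x p]
    set 𝒞 : Fin ℓ → (Fin ℓ × Fin ℓ) → Finset (Finset (Fin n)) := fun k p =>
      if p.1 = k then (parts p).powerset
      else if p.2 = k then (parts p).powerset.filter (fun A => A.card ≤ m p.1 p.2)
      else {∅} with h𝒞def
    set 𝓕 : Fin ℓ → Finset (Finset (Fin n)) := fun k =>
      (P.sup parts).powerset.filter (fun F => ∀ p ∈ P, F ∩ parts p ∈ 𝒞 k p) with h𝓕def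
    have hsub𝒞 : ∀ k : Fin ℓ, ∀ p ∈ P, ∀ A ∈ 𝒞 k p, A ⊆ parts p := by
      intro k p _ A hA
      simp only [h𝒞def] at hA
      split_ifs at hA with h1 h2
      · exact Finset.mem_powerset.1 hA
      · exact Finset.mem_powerset.1 (Finset.mem_filter.1 hA).1
      · rw [Finset.mem_singleton.1 hA]; exact Finset.empty_subset _
    have hFmem : ∀ k F, F ∈ 𝓕 k → ∀ p ∈ P, F ∩ parts p ∈ 𝒞 k p := by
      intro k F hF
      exact (Finset.mem_filter.1 hF).2
    -- the M-overlap property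
    have hover : MOverlap n ℓ m 𝓕 := by
      intro k₁ k₂ hne F₁ hF₁ F₂ hF₂
      set q : Fin ℓ × Fin ℓ := if k₁ < k₂ then (k₁, k₂) else (k₂, k₁) with hqdef
      have hqP : q ∈ P := by
        rw [hmemP]
        rcases lt_or_gt_of_ne hne with h | h
        · simp [hqdef, h]
        · simp [hqdef, not_lt_of_gt h, h]
      have hempty : ∀ k F p, F ∈ 𝓕 k → p ∈ P → p.1 ≠ k → p.2 ≠ k → F ∩ parts p = ∅ := by
        intro k F p hF hp h1 h2
        have := hFmem k F hF p hp
        simp only [h𝒞def, if_neg h1, if_neg h2] at this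
        exact Finset.mem_singleton.1 this
      rw [hfiber (F₁ ∩ F₂)]
      rw [Finset.sum_eq_single_of_mem q hqP]
      · -- the term at q
        have hq12 : q.1 ≠ q.2 := ne_of_lt ((hmemP q).1 hqP)
        rcases lt_or_gt_of_ne hne with h | h
        · have hq : q = (k₁, k₂) := by simp [hqdef, h]
          have h2 := hFmem k₂ F₂ hF₂ q hqP
          have hq1 : q.1 ≠ k₂ := by rw [hq]; exact hne
          have hq2 : q.2 = k₂ := by rw [hq]
          simp only [h𝒞def, if_neg hq1, if_pos hq2, Finset.mem_filter] at h2
          calc ((F₁ ∩ F₂) ∩ parts q).card ≤ (F₂ ∩ parts q).card := by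
                apply Finset.card_le_card
                intro x hx
                simp only [Finset.mem_inter] at hx ⊢
                exact ⟨hx.1.2, hx.2⟩
            _ ≤ m q.1 q.2 := h2.2
            _ = m k₁ k₂ := by rw [hq]
        · have hq : q = (k₂, k₁) := by simp [hqdef, not_lt_of_gt h]
          have h2 := hFmem k₁ F₁ hF₁ q hqP
          have hq1 : q.1 ≠ k₁ := by rw [hq]; exact hne.symm
          have hq2 : q.2 = k₁ := by rw [hq]
          simp only [h𝒞def, if_neg hq1, if_pos hq2, Finset.mem_filter] at h2
          calc ((F₁ ∩ F₂) ∩ parts q).card ≤ (F₁ ∩ parts q).card := by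
                apply Finset.card_le_card
                intro x hx
                simp only [Finset.mem_inter] at hx ⊢
                exact ⟨hx.1.1, hx.2⟩
            _ ≤ m q.1 q.2 := h2.2
            _ = m k₁ k₂ := by rw [hq, hsym]
      · -- other terms vanish
        intro p hp hpq
        have hp12 : p.1 < p.2 := (hmemP p).1 hp
        have key : (p.1 ≠ k₁ ∧ p.2 ≠ k₁) ∨ (p.1 ≠ k₂ ∧ p.2 ≠ k₂) := by
          by_cases ha : p.1 = k₁ ∨ p.2 = k₁
          swap
          · push_neg at ha; exact Or.inl ha
          by_cases hb : p.1 = k₂ ∨ p.2 = k₂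
          swap
          · push_neg at hb; exact Or.inr hb
          exfalso
          apply hpq
          rcases ha with h1 | h1 <;> rcases hb with h2 | h2
          · exact absurd (h1.symm.trans h2) hne
          · have hlt : k₁ < k₂ := by rw [← h1, ← h2]; exact hp12
            rw [hqdef, if_pos hlt]
            exact Prod.ext h1 h2
          · have hlt : k₂ < k₁ := by rw [← h2, ← h1]; exact hp12
            rw [hqdef, if_neg (not_lt_of_gt hlt)]
            exact Prod.ext h2 h1
          · exact absurd (h1.symm.trans h2) hne
        rcases key with ⟨h1, h2⟩ | ⟨h1, h2⟩
        · have he := hempty k₁ F₁ p hF₁ hp h1 h2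
          rw [Finset.card_eq_zero, ← Finset.subset_empty, ← he]
          intro x hx
          simp only [Finset.mem_inter] at hx ⊢
          exact ⟨hx.1.1, hx.2⟩
        · have he := hempty k₂ F₂ p hF₂ hp h1 h2
          rw [Finset.card_eq_zero, ← Finset.subset_empty, ← he]
          intro x hx
          simp only [Finset.mem_inter] at hx ⊢
          exact ⟨hx.1.2, hx.2⟩
    refine ⟨𝓕, hover, ?_⟩
    -- cardinality of each family
    have hFcard : ∀ k : Fin ℓ, (𝓕 k).card = ∏ p ∈ P, (𝒞 k p).card := by
      intro k
      refine myCount' parts (𝒞 k) P (fun i _ j _ h => hdisj i j h) (hsub𝒞 k) (𝓕 k) (fun F => ?_)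
      rw [h𝓕def]
      rw [Finset.mem_filter, Finset.mem_powerset]
    set D : (Fin ℓ × Fin ℓ) → ℕ :=
      fun p => ((parts p).powerset.filter (fun A => A.card ≤ m p.1 p.2)).card with hDdef
    have hinner : ∀ p ∈ P, (∏ k : Fin ℓ, (𝒞 k p).card) = 2 ^ sizes p * D p := by
      intro p hp
      have hne12 : p.1 ≠ p.2 := ne_of_lt ((hmemP p).1 hp)
      have h1 : ∀ k ∈ (Finset.univ : Finset (Fin ℓ)), k ∉ ({p.1, p.2} : Finset (Fin ℓ)) →
          (𝒞 k p).card = 1 := by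
        intro k _ hk
        simp only [Finset.mem_insert, Finset.mem_singleton] at hk
        push_neg at hk
        simp [h𝒞def, Ne.symm hk.1, Ne.symm hk.2]
      rw [← Finset.prod_subset (Finset.subset_univ ({p.1, p.2} : Finset (Fin ℓ))) h1,
        Finset.prod_pair hne12]
      have h2 : 𝒞 p.1 p = (parts p).powerset := by simp [h𝒞def]
      have h3 : 𝒞 p.2 p = (parts p).powerset.filter (fun A => A.card ≤ m p.1 p.2) := by
        simp [h𝒞def, hne12]
      rw [h2, h3, Finset.card_powerset, hcard]
    have hprodcard : (∏ k, (𝓕 k).card) = 2 ^ n * ∏ p ∈ P, D p := by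
      calc ∏ k, (𝓕 k).card = ∏ k : Fin ℓ, ∏ p ∈ P, (𝒞 k p).card :=
            Finset.prod_congr rfl (fun k _ => hFcard k)
        _ = ∏ p ∈ P, ∏ k : Fin ℓ, (𝒞 k p).card := Finset.prod_comm
        _ = ∏ p ∈ P, (2 ^ sizes p * D p) := Finset.prod_congr rfl hinner
        _ = (∏ p ∈ P, 2 ^ sizes p) * ∏ p ∈ P, D p := Finset.prod_mul_distrib
        _ = 2 ^ n * ∏ p ∈ P, D p := by rw [Finset.prod_pow_eq_pow_sum, hsumP]
    -- real lower bound on sizes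
    have hsz : ∀ p ∈ P, (m p.1 p.2 : ℝ) * n / σ - 1 ≤ (sizes p : ℝ) := by
      intro p hp
      by_cases hpp : p = p₀
      · subst hpp
        have h1 : sizes p = n - S := by simp [hsizes]
        have hScast : (S : ℝ) ≤ ((σ : ℝ) - m p.1 p.2) * n / σ := by
          have h2 : (S : ℝ) = ∑ q ∈ P.erase p, ((m q.1 q.2 * n / σ : ℕ) : ℝ) := by
            rw [hSdef]; push_cast; ring
          rw [h2]
          have h3 : ∑ q ∈ P.erase p, ((m q.1 q.2 * n / σ : ℕ) : ℝ)
              ≤ ∑ q ∈ P.erase p, (m q.1 q.2 : ℝ) * n / σ := by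
            refine Finset.sum_le_sum (fun q _ => ?_)
            calc ((m q.1 q.2 * n / σ : ℕ) : ℝ) ≤ ((m q.1 q.2 * n : ℕ) : ℝ) / ((σ : ℕ) : ℝ) :=
                  Nat.cast_div_le
              _ = (m q.1 q.2 : ℝ) * n / σ := by push_cast; ring
          refine h3.trans ?_
          have h4 : ∑ q ∈ P.erase p, (m q.1 q.2 : ℝ) = (σ : ℝ) - m p.1 p.2 := by
            have h5 : m p.1 p.2 + ∑ q ∈ P.erase p, m q.1 q.2 = σ :=
              Finset.add_sum_erase P (fun q : Fin ℓ × Fin ℓ => m q.1 q.2) hp₀P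
            have h6 := congrArg (fun z : ℕ => (z : ℝ)) h5
            push_cast at h6
            linarith
          have h7 : ∑ q ∈ P.erase p, (m q.1 q.2 : ℝ) * n / σ
              = (∑ q ∈ P.erase p, (m q.1 q.2 : ℝ)) * n / σ := by
            rw [← Finset.sum_div, ← Finset.sum_mul]
          rw [h7, h4]
        have h8 : ((sizes p : ℕ) : ℝ) = (n : ℝ) - S := by
          rw [h1]; push_cast [hS_le]; ring
        rw [h8]
        have h9 : ((σ : ℝ) - m p.1 p.2) * n / σ = n - (m p.1 p.2 : ℝ) * n / σ := by
          field_simp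
        rw [h9] at hScast
        linarith
      · have h1 : sizes p = m p.1 p.2 * n / σ := by simp [hsizes, hpp, hp]
        rw [h1]
        have hdm := Nat.div_add_mod (m p.1 p.2 * n) σ
        have hmod : (m p.1 p.2 * n) % σ < σ := Nat.mod_lt _ hσpos
        have h2 : ((σ : ℕ) : ℝ) * ((m p.1 p.2 * n / σ : ℕ) : ℝ) + (((m p.1 p.2 * n) % σ : ℕ) : ℝ)
            = ((m p.1 p.2 * n : ℕ) : ℝ) := by exact_mod_cast hdm
        have h3 : (((m p.1 p.2 * n) % σ : ℕ) : ℝ) < (σ : ℝ) := by exact_mod_cast hmod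
        have h4 : (m p.1 p.2 : ℝ) * n = ((m p.1 p.2 * n : ℕ) : ℝ) := by push_cast; ring
        rw [h4, sub_le_iff_le_add, div_le_iff₀ hσR]
        nlinarith [h2, h3]
    have hσ1R : (1:ℝ) ≤ σ := by exact_mod_cast hσpos
    -- per-pair lower bound on D
    have hD : ∀ p ∈ P,
        (1 - ((1 + (m p.1 p.2 : ℝ)) * σ) / n) *
          ((1 : ℝ) / (Nat.factorial (m p.1 p.2)) * ((m p.1 p.2 : ℝ) * n / (σ : ℕ)) ^ (m p.1 p.2))
          ≤ (D p : ℝ) := by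
      intro p hp
      set t := m p.1 p.2 with htdef
      set x : ℝ := (t : ℝ) * n / σ with hxdef
      have hx1 : x - 1 ≤ (sizes p : ℝ) := hsz p hp
      by_cases ht0 : t = 0
      · rw [ht0]
        simp only [pow_zero, Nat.factorial_zero, Nat.cast_one, mul_one, Nat.cast_zero]
        have hD1 : 1 ≤ D p := by
          rw [hDdef]
          refine Finset.card_pos.2 ⟨∅, ?_⟩
          simp
        have hD1R : (1:ℝ) ≤ (D p : ℝ) := by exact_mod_cast hD1
        have hnn : (0:ℝ) ≤ ((1:ℝ) + 0) * σ / n := by positivity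
        nlinarith
      · have ht1 : 1 ≤ t := Nat.one_le_iff_ne_zero.2 ht0
        have htσ : t ≤ σ := hmP p hp
        have ht1R : (1:ℝ) ≤ t := by exact_mod_cast ht1
        have hxt : (t : ℝ) + 1 ≤ x := by
          rw [hxdef, le_div_iff₀ hσR]
          have htσR : (t:ℝ) ≤ σ := by exact_mod_cast htσ
          nlinarith [hbigR]
        have hst : t ≤ sizes p := by
          have h1 : (t : ℝ) ≤ (sizes p : ℝ) := by linarith
          exact_mod_cast h1
        have hnat1 : (sizes p + 1 - t) ^ t ≤ Nat.descFactorial (sizes p) t :=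
          Nat.pow_sub_le_descFactorial (sizes p) t
        have hnat2 : Nat.descFactorial (sizes p) t = t.factorial * Nat.choose (sizes p) t :=
          Nat.descFactorial_eq_factorial_mul_choose (sizes p) t
        have hchD : Nat.choose (sizes p) t ≤ D p := by
          rw [hDdef]
          calc Nat.choose (sizes p) t = ((parts p).powersetCard t).card := by
                rw [Finset.card_powersetCard, hcard]
            _ ≤ _ := by
                apply Finset.card_le_card
                intro A hA
                rw [Finset.mem_powersetCard] at hA
                rw [Finset.mem_filter, Finset.mem_powerset]
                exact ⟨hA.1, le_of_eq hA.2⟩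
        have hts1 : t ≤ sizes p + 1 := le_trans hst (Nat.le_succ _)
        have hcast1 : ((sizes p + 1 - t : ℕ) : ℝ) = (sizes p : ℝ) + 1 - t := by
          push_cast [hts1]
          ring
        have hx0 : (0:ℝ) < x := by linarith
        have hbern : x ^ t * (1 - (t:ℝ) * t / x) ≤ (x - t) ^ t := by
          have h0 : x - t = x * (1 + (-((t:ℝ)/x))) := by
            field_simp
            ring
          have h1 : (-2 : ℝ) ≤ -((t:ℝ)/x) := by
            have h2 : (t:ℝ)/x ≤ 1 := by rw [div_le_one hx0]; linarith
            linarith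
          have h2 := one_add_mul_le_pow h1 t
          have h3 : (x - t)^t = x^t * (1 + (-((t:ℝ)/x)))^t := by rw [h0, mul_pow]
          rw [h3]
          have h4 : x ^ t * (1 - (t:ℝ)*t/x) = x ^ t * (1 + (t:ℝ) * (-((t:ℝ)/x))) := by ring
          rw [h4]
          exact mul_le_mul_of_nonneg_left h2 (by positivity)
        have htnpos : (0:ℝ) < (t:ℝ) * n := mul_pos (by linarith) hn0
        have heq : (t:ℝ) * t / x = (t:ℝ) * σ / n := by
          rw [hxdef, div_div_eq_mul_div, div_eq_div_iff (ne_of_gt htnpos) (ne_of_gt hn0)]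
          ring
        have hfact : (0:ℝ) < (t.factorial : ℝ) := by exact_mod_cast t.factorial_pos
        have hxt0 : (0:ℝ) ≤ x - t := by linarith
        have hchain : x ^ t * (1 - ((1 + (t:ℝ)) * σ) / n) ≤ (t.factorial : ℝ) * D p := by
          calc x ^ t * (1 - ((1 + (t:ℝ)) * σ) / n) ≤ x ^ t * (1 - (t:ℝ)*t/x) := by
                apply mul_le_mul_of_nonneg_left _ (by positivity)
                rw [heq]
                have h5 : (t:ℝ)*σ/n ≤ (1 + (t:ℝ))*σ/n := by
                  gcongr
                  nlinarith
                linarith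
            _ ≤ (x - t) ^ t := hbern
            _ ≤ ((sizes p : ℝ) + 1 - t) ^ t := by
                apply pow_le_pow_left₀ hxt0
                linarith
            _ = ((sizes p + 1 - t : ℕ) : ℝ) ^ t := by rw [hcast1]
            _ ≤ ((t.factorial * Nat.choose (sizes p) t : ℕ) : ℝ) := by
                have := hnat2 ▸ hnat1
                exact_mod_cast this
            _ ≤ (t.factorial : ℝ) * D p := by
                push_cast
                exact mul_le_mul_of_nonneg_left (by exact_mod_cast hchD) (by positivity)
        have hrw : (1 - ((1 + (t:ℝ)) * σ) / n) * ((1 : ℝ) / (t.factorial : ℝ) * x ^ t)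
            = (x ^ t * (1 - ((1 + (t:ℝ)) * σ) / n)) / (t.factorial : ℝ) := by ring
        rw [hrw, div_le_iff₀ hfact]
        linarith [hchain]
    -- combine
    have hapn1 : ∀ p ∈ P, ((1 + (m p.1 p.2 : ℝ)) * σ) / n ≤ 1 := by
      intro p hp
      rw [div_le_one hn0]
      have h1 : (m p.1 p.2 : ℝ) ≤ σ := by exact_mod_cast hmP p hp
      nlinarith [hbigR]
    have hapn0 : ∀ p ∈ P, (0:ℝ) ≤ ((1 + (m p.1 p.2 : ℝ)) * σ) / n := by
      intro p _
      positivity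
    have hweier := myWeier P (fun p => ((1 + (m p.1 p.2 : ℝ)) * σ) / n) hapn0 hapn1
    have hsumC : ∑ p ∈ P, ((1 + (m p.1 p.2 : ℝ)) * σ) / n ≤ (Cn : ℝ) / n := by
      rw [← Finset.sum_div]
      apply div_le_div_of_nonneg_right ?_ hn0.le

      have h1 : ∑ p ∈ P, ((1 + (m p.1 p.2 : ℝ)) * σ) = ((∑ p ∈ P, (1 + m p.1 p.2) * σ : ℕ) : ℝ) := by
        push_cast
        ring
      rw [h1]
      have h2 : (∑ p ∈ P, (1 + m p.1 p.2) * σ : ℕ) ≤ Cn := by omega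
      exact_mod_cast h2
    have hstep1 : 1 - (Cn : ℝ) / n ≤ ∏ p ∈ P, (1 - ((1 + (m p.1 p.2 : ℝ)) * σ) / n) := by
      calc 1 - (Cn : ℝ) / n ≤ 1 - ∑ p ∈ P, ((1 + (m p.1 p.2 : ℝ)) * σ) / n := by linarith
        _ ≤ _ := hweier
    have hstep2 : (∏ p ∈ P, (1 - ((1 + (m p.1 p.2 : ℝ)) * σ) / n)) *
        (∏ p ∈ P, ((1 : ℝ) / (Nat.factorial (m p.1 p.2)) *
          ((m p.1 p.2 : ℝ) * n / (σ : ℕ)) ^ (m p.1 p.2)))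
        ≤ ∏ p ∈ P, (D p : ℝ) := by
      rw [← Finset.prod_mul_distrib]
      apply Finset.prod_le_prod
      · intro p hp
        have := hapn1 p hp
        have h0 := hBnn p hp
        have h1 : (0:ℝ) ≤ 1 - ((1 + (m p.1 p.2 : ℝ)) * σ) / n := by linarith
        exact mul_nonneg h1 h0
      · intro p hp
        exact hD p hp
    rw [hprodcard]
    have hRHS : ((2 ^ n * ∏ p ∈ P, D p : ℕ) : ℝ) = 2 ^ n * ∏ p ∈ P, (D p : ℝ) := by
      push_cast
      ring
    rw [hRHS]
    have hLHS : (1 - (Cn : ℝ) / n) * 2 ^ n *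
        ∏ p ∈ P, ((1 : ℝ) / (Nat.factorial (m p.1 p.2)) *
          ((m p.1 p.2 : ℝ) * n / (σ : ℕ)) ^ (m p.1 p.2))
        = 2 ^ n * ((1 - (Cn : ℝ) / n) *
          ∏ p ∈ P, ((1 : ℝ) / (Nat.factorial (m p.1 p.2)) *
            ((m p.1 p.2 : ℝ) * n / (σ : ℕ)) ^ (m p.1 p.2))) := by ring
    rw [hLHS]
    apply mul_le_mul_of_nonneg_left _ (by positivity)
    calc (1 - (Cn : ℝ) / n) *
          ∏ p ∈ P, ((1 : ℝ) / (Nat.factorial (m p.1 p.2)) *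
            ((m p.1 p.2 : ℝ) * n / (σ : ℕ)) ^ (m p.1 p.2))
        ≤ (∏ p ∈ P, (1 - ((1 + (m p.1 p.2 : ℝ)) * σ) / n)) *
          ∏ p ∈ P, ((1 : ℝ) / (Nat.factorial (m p.1 p.2)) *
            ((m p.1 p.2 : ℝ) * n / (σ : ℕ)) ^ (m p.1 p.2)) :=
          mul_le_mul_of_nonneg_right hstep1 hBprodnn
      _ ≤ ∏ p ∈ P, (D p : ℝ) := hstep2
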